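/- Let τ₂ < τ₁ be real thresholds and q ∈ (0,1]. Define the attendee mean type at the less selective university as M_t = (∫_{{τ₂ ≤ A < τ₁}} t dμ + (1−q)·∫_{{A ≥ τ₁}} t dμ) / (μ{τ₂ ≤ A < τ₁} + (1−q)·μ{A ≥ τ₁}), and analogously M_s with s in place of t. Then M_t < (∫_{{A ≥ τ₂}} t dμ)/μ{A ≥ τ₂} and M_s < (∫_{{A ≥ τ₂}} s dμ)/μ{A ≥ τ₂}; that is, the less selective university's attendees have strictly lower average type and strictly lower average soft skill than the set of all students it admits. -/

import Mathlib

open MeasureTheory ProbabilityTheory Real Set Filter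
open scoped NNReal ENNReal

/-- Product of three standard Gaussian measures on ℝ³, coordinates (t, s, z). -/
noncomputable def mu3 : Measure (ℝ × ℝ × ℝ) :=
  (gaussianReal 0 1).prod ((gaussianReal 0 1).prod (gaussianReal 0 1))


lemma st13_pdf_neg (t : ℝ≥0) (x : ℝ) : gaussianPDFReal 0 t (-x) = gaussianPDFReal 0 t x := by
  simp only [gaussianPDFReal, sub_zero]
  ring_nf

lemma st13_odd (t : ℝ≥0) : ∫ x, x * gaussianPDFReal 0 t x = 0 := by
  have h2 : ∫ x, (-x) * gaussianPDFReal 0 t (-x) = ∫ x, x * gaussianPDFReal 0 t x :=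
    MeasureTheory.integral_neg_eq_self (fun x => x * gaussianPDFReal 0 t x) volume
  have h3 : (fun x : ℝ => (-x) * gaussianPDFReal 0 t (-x))
      = fun x => -(x * gaussianPDFReal 0 t x) := by
    funext x; rw [st13_pdf_neg]; ring
  rw [h3, integral_neg] at h2
  linarith

lemma st13_int0 (t : ℝ≥0) : Integrable (fun x => x * gaussianPDFReal 0 t x) := by
  rcases eq_or_ne t 0 with rfl | ht
  · simp [gaussianPDFReal_zero_var]
  · have ht' : (0:ℝ) < t := by positivity
    have hb : (0:ℝ) < (2 * (t:ℝ))⁻¹ := by positivity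
    have : (fun x : ℝ => x * gaussianPDFReal 0 t x)
        = fun x => (Real.sqrt (2 * π * t))⁻¹ * (x * Real.exp (-(2 * (t:ℝ))⁻¹ * x ^ 2)) := by
      funext x
      simp only [gaussianPDFReal, sub_zero]
      rw [show -x ^ 2 / (2 * (t:ℝ)) = -(2 * (t:ℝ))⁻¹ * x ^ 2 by field_simp]
      ring
    rw [this]
    exact (integrable_mul_exp_neg_mul_sq hb).const_mul _

lemma st13_int (m : ℝ) (t : ℝ≥0) : Integrable (fun x => x * gaussianPDFReal 0 t (x - m)) := by
  have h : Integrable (fun y : ℝ => (y + m) * gaussianPDFReal 0 t y) := by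
    have := (st13_int0 t).add ((integrable_gaussianPDFReal 0 t).const_mul m)
    refine this.congr ?_
    filter_upwards with y
    simp only [Pi.add_apply]; ring
  have h2 := h.comp_sub_right m
  simpa using h2

lemma st13_mean (m : ℝ) (t : ℝ≥0) (ht : t ≠ 0) :
    ∫ x, x * gaussianPDFReal 0 t (x - m) = m := by
  have h2 : ∫ x, ((x - m) + m) * gaussianPDFReal 0 t (x - m)
      = ∫ y, (y + m) * gaussianPDFReal 0 t y :=
    integral_sub_right_eq_self (fun y => (y + m) * gaussianPDFReal 0 t y) m
  simp only [sub_add_cancel] at h2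
  rw [h2, show (fun y : ℝ => (y + m) * gaussianPDFReal 0 t y)
      = fun y => y * gaussianPDFReal 0 t y + m * gaussianPDFReal 0 t y by funext y; ring]
  rw [integral_add (st13_int0 t) ((integrable_gaussianPDFReal 0 t).const_mul m),
    st13_odd, MeasureTheory.integral_const_mul, integral_gaussianPDFReal_eq_one 0 ht]
  ring

lemma st13_factor (a : ℝ) (r2 v : ℝ≥0) (hr2 : r2 ≠ 0) (hv : (v:ℝ) = a^2 + r2) (x u : ℝ) :
    gaussianPDFReal 0 1 x * gaussianPDFReal 0 r2 (u - a*x)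
      = gaussianPDFReal 0 (r2/v) (x - a*u/v) * gaussianPDFReal 0 v u := by
  have hr2' : (0:ℝ) < r2 := by positivity
  have hv' : (0:ℝ) < v := by rw [hv]; positivity
  have hvne : (v:ℝ) ≠ 0 := hv'.ne'
  have hcoe : ((r2/v : ℝ≥0) : ℝ) = (r2:ℝ)/(v:ℝ) := by push_cast; ring
  simp only [gaussianPDFReal, sub_zero, hcoe, NNReal.coe_one]
  have hC : (Real.sqrt (2*π*1))⁻¹ * (Real.sqrt (2*π*(r2:ℝ)))⁻¹
      = (Real.sqrt (2*π*((r2:ℝ)/(v:ℝ))))⁻¹ * (Real.sqrt (2*π*(v:ℝ)))⁻¹ := by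
    rw [← mul_inv, ← mul_inv, ← Real.sqrt_mul (by positivity), ← Real.sqrt_mul (by positivity)]
    congr 1
    field_simp
  have hE : Real.exp (-x^2/(2*1)) * Real.exp (-(u-a*x)^2/(2*(r2:ℝ)))
      = Real.exp (-(x-a*u/(v:ℝ))^2/(2*((r2:ℝ)/(v:ℝ)))) * Real.exp (-u^2/(2*(v:ℝ))) := by
    rw [← Real.exp_add, ← Real.exp_add]
    congr 1
    have hveq : (v:ℝ) = a^2 + (r2:ℝ) := hv
    rw [hveq]
    have hrne : (r2:ℝ) ≠ 0 := hr2'.ne'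
    have hane : a^2 + (r2:ℝ) ≠ 0 := by positivity
    field_simp
    ring
  calc (Real.sqrt (2*π*1))⁻¹ * Real.exp (-x^2/(2*1))
        * ((Real.sqrt (2*π*(r2:ℝ)))⁻¹ * Real.exp (-(u-a*x)^2/(2*(r2:ℝ))))
      = ((Real.sqrt (2*π*1))⁻¹ * (Real.sqrt (2*π*(r2:ℝ)))⁻¹)
        * (Real.exp (-x^2/(2*1)) * Real.exp (-(u-a*x)^2/(2*(r2:ℝ)))) := by ring
    _ = ((Real.sqrt (2*π*((r2:ℝ)/(v:ℝ))))⁻¹ * (Real.sqrt (2*π*(v:ℝ)))⁻¹)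
        * (Real.exp (-(x-a*u/(v:ℝ))^2/(2*((r2:ℝ)/(v:ℝ)))) * Real.exp (-u^2/(2*(v:ℝ)))) := by
        rw [hC, hE]
    _ = _ := by ring

lemma st13_density (m : ℝ) (t : ℝ≥0) (ht : t ≠ 0) (G : ℝ → ℝ) :
    ∫ x, G x ∂(gaussianReal m t) = ∫ x, gaussianPDFReal m t x * G x := by
  rw [gaussianReal_of_var_ne_zero m ht]
  have : (gaussianPDF m t) = fun x => ((fun x => (gaussianPDFReal m t x).toNNReal) x : ℝ≥0∞) := by
    funext x; rfl
  rw [this, integral_withDensity_eq_integral_smul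
    ((measurable_gaussianPDFReal m t).real_toNNReal) G]
  congr 1; funext x
  rw [NNReal.smul_def, Real.coe_toNNReal _ (gaussianPDFReal_nonneg m t x), smul_eq_mul]

lemma st13_density_set (m : ℝ) (t : ℝ≥0) (ht : t ≠ 0) (S : Set ℝ) (hS : MeasurableSet S)
    (G : ℝ → ℝ) :
    ∫ x in S, G x ∂(gaussianReal m t) = ∫ x in S, gaussianPDFReal m t x * G x := by
  rw [gaussianReal_of_var_ne_zero m ht, restrict_withDensity hS]
  have : (gaussianPDF m t) = fun x => ((fun x => (gaussianPDFReal m t x).toNNReal) x : ℝ≥0∞) := by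
    funext x; rfl
  rw [this, integral_withDensity_eq_integral_smul
    ((measurable_gaussianPDFReal m t).real_toNNReal) G]
  congr 1; funext x
  rw [NNReal.smul_def, Real.coe_toNNReal _ (gaussianPDFReal_nonneg m t x), smul_eq_mul]

lemma st13_integrable_gauss (t : ℝ≥0) (w : ℝ → ℝ)
    (hwint : Integrable (fun x => w x * gaussianPDFReal 0 t x)) (ht : t ≠ 0) :
    Integrable w (gaussianReal 0 t) := by
  rw [gaussianReal_of_var_ne_zero 0 ht]
  rw [integrable_withDensity_iff (measurable_gaussianPDF 0 t)
    (ae_of_all _ (fun x => ENNReal.ofReal_lt_top))]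
  refine hwint.congr ?_
  filter_upwards with x
  rw [gaussianPDF_def, ENNReal.toReal_ofReal (gaussianPDFReal_nonneg 0 t x)]

lemma st13_pos (t : ℝ≥0) (ht : t ≠ 0) (S : Set ℝ) (hS : MeasurableSet S)
    (hvol : volume S ≠ 0) : 0 < gaussianReal 0 t S := by
  rw [pos_iff_ne_zero, gaussianReal_apply 0 ht S]
  intro h0
  rw [lintegral_eq_zero_iff (measurable_gaussianPDF 0 t)] at h0
  have h1 : ∀ᵐ x ∂(volume.restrict S), False := by
    filter_upwards [h0] with x hx
    exact absurd hx (gaussianPDF_pos 0 ht x).ne'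
  have : volume.restrict S = 0 := by
    rw [← MeasureTheory.ae_eq_bot]
    exact Filter.eventually_false_iff_eq_bot.mp h1
  exact hvol (by rwa [Measure.restrict_eq_zero] at this)

-- helper: indicator as product
lemma st13_ind (S : Set ℝ) (h : ℝ → ℝ) (u : ℝ) :
    S.indicator h u = h u * S.indicator 1 u := by
  by_cases hu : u ∈ S <;> simp [Set.indicator_apply, hu]

lemma st13_main2 (a : ℝ) (r2 : ℝ≥0) (hr2 : r2 ≠ 0) (v : ℝ≥0) (hv : (v:ℝ) = a^2 + r2)
    (S : Set ℝ) (hS : MeasurableSet S) (w k : ℝ → ℝ) (hw : Measurable w)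
    (hwint : ∀ (m : ℝ) (t : ℝ≥0), Integrable (fun x => w x * gaussianPDFReal 0 t (x - m)))
    (hwmean : ∀ (m : ℝ) (t : ℝ≥0), t ≠ 0 → ∫ x, w x * gaussianPDFReal 0 t (x - m) = k m) :
    ∫ p, w p.1 * S.indicator 1 (a * p.1 + p.2)
        ∂((gaussianReal 0 1).prod (gaussianReal 0 r2))
      = ∫ u in S, k (a * u / v) ∂(gaussianReal 0 v) := by
  have hv0 : (0:ℝ) < v := by
    have : (0:ℝ) < r2 := by positivity
    rw [hv]; positivity
  have hvne : v ≠ 0 := by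
    intro h; rw [h] at hv0; simp at hv0
  have hr2v : r2 / v ≠ 0 := by
    intro h
    have := div_eq_zero_iff.mp h
    rcases this with h1 | h1
    · exact hr2 h1
    · exact hvne h1
  -- integrability of w against gaussians
  have hw1 : Integrable (fun x => w x * gaussianPDFReal 0 1 x) := by
    simpa using hwint 0 1
  have hwγ : Integrable w (gaussianReal 0 1) := by
    rw [gaussianReal_of_var_ne_zero 0 one_ne_zero]
    rw [integrable_withDensity_iff (measurable_gaussianPDF 0 1)
      (ae_of_all _ (fun x => ENNReal.ofReal_lt_top))]
    refine hw1.congr ?_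
    filter_upwards with x
    rw [gaussianPDF_def, ENNReal.toReal_ofReal (gaussianPDFReal_nonneg 0 1 x)]
  -- measurability of the integrand
  have hind : Measurable (S.indicator (1 : ℝ → ℝ)) := measurable_one.indicator hS
  have hFm : Measurable (fun p : ℝ × ℝ => w p.1 * S.indicator 1 (a * p.1 + p.2)) := by
    exact (hw.comp measurable_fst).mul
      (hind.comp ((measurable_fst.const_mul a).add measurable_snd))
  -- integrability on the product
  have hwfst : Integrable (fun p : ℝ × ℝ => w p.1)
      ((gaussianReal 0 1).prod (gaussianReal 0 r2)) := by
    have hmap : ((gaussianReal 0 1).prod (gaussianReal 0 r2)).map Prod.fst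
        = gaussianReal 0 1 := by
      simp
    have := hwγ
    rw [← hmap] at this
    exact (integrable_map_measure hw.aestronglyMeasurable
      measurable_fst.aemeasurable).mp this
  have hFint : Integrable (fun p : ℝ × ℝ => w p.1 * S.indicator 1 (a * p.1 + p.2))
      ((gaussianReal 0 1).prod (gaussianReal 0 r2)) := by
    refine Integrable.mono hwfst hFm.aestronglyMeasurable ?_
    filter_upwards with p
    rw [Real.norm_eq_abs, Real.norm_eq_abs, abs_mul]
    by_cases h : (a * p.1 + p.2) ∈ S <;>
      simp [Set.indicator_apply, h, abs_nonneg]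
  rw [MeasureTheory.integral_prod _ hFint]
  -- inner integral
  have hinner : ∀ x : ℝ, ∫ y, w x * S.indicator 1 (a * x + y) ∂(gaussianReal 0 r2)
      = w x * ∫ u in S, gaussianPDFReal 0 r2 (u - a * x) := by
    intro x
    rw [MeasureTheory.integral_const_mul]
    congr 1
    have hmap : (gaussianReal 0 r2).map (fun y => a * x + y) = gaussianReal (a*x) r2 := by
      have := gaussianReal_map_const_add (μ := 0) (v := r2) (a*x)
      simpa using this
    calc ∫ y, S.indicator 1 (a * x + y) ∂(gaussianReal 0 r2)
        = ∫ u, S.indicator 1 u ∂((gaussianReal 0 r2).map (fun y => a * x + y)) := by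
          rw [integral_map (by fun_prop) (by
            rw [hmap]; exact hind.aestronglyMeasurable)]
      _ = ((gaussianReal (a*x) r2) S).toReal := by rw [hmap, integral_indicator_one hS]; rfl
      _ = ∫ u in S, gaussianPDFReal (a*x) r2 u := by
          rw [gaussianReal_apply_eq_integral _ hr2,
            ENNReal.toReal_ofReal (setIntegral_nonneg hS
              (fun u _ => gaussianPDFReal_nonneg _ _ u))]
      _ = ∫ u in S, gaussianPDFReal 0 r2 (u - a * x) := by
          refine setIntegral_congr_fun hS (fun u _ => ?_)
          rw [gaussianPDFReal_sub, zero_add]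
  simp_rw [hinner]
  -- convert outer gaussian integral to volume integral with density
  rw [st13_density 0 1 one_ne_zero]
  -- define the double integrand
  set g : ℝ → ℝ → ℝ := fun x u =>
    (w x * gaussianPDFReal 0 1 x * gaussianPDFReal 0 r2 (u - a * x)) * S.indicator 1 u with hg
  have hgm : Measurable (Function.uncurry g) := by
    apply Measurable.mul
    · exact ((hw.comp measurable_fst).mul
        ((measurable_gaussianPDFReal 0 1).comp measurable_fst)).mul
        ((measurable_gaussianPDFReal 0 r2).comp
          (measurable_snd.sub (measurable_fst.const_mul a)))
    · exact hind.comp measurable_snd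
  have hstep : ∀ x : ℝ, gaussianPDFReal 0 1 x * (w x * ∫ u in S, gaussianPDFReal 0 r2 (u - a*x))
      = ∫ u, g x u := by
    intro x
    have e1 : (fun u => g x u) = fun u => S.indicator
        (fun u => (w x * gaussianPDFReal 0 1 x) * gaussianPDFReal 0 r2 (u - a*x)) u := by
      funext u
      rw [st13_ind]
    rw [e1, integral_indicator hS, MeasureTheory.integral_const_mul]
    try ring
  simp_rw [hstep]
  -- integrability for Fubini swap
  have hgint : Integrable (Function.uncurry g) (volume.prod volume) := by
    rw [integrable_prod_iff hgm.aestronglyMeasurable]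
    constructor
    · refine ae_of_all _ (fun x => ?_)
      have hbase : Integrable (fun u => (w x * gaussianPDFReal 0 1 x) *
          gaussianPDFReal 0 r2 (u - a * x)) volume :=
        ((integrable_gaussianPDFReal 0 r2).comp_sub_right (a*x)).const_mul _
      have := (hbase.indicator hS)
      refine this.congr ?_
      filter_upwards with u
      rw [st13_ind]
      show _ = g x u
      show _ = w x * gaussianPDFReal 0 1 x * gaussianPDFReal 0 r2 (u - a * x) * S.indicator 1 u
      ring
    · have huncur : (fun x => ∫ y, ‖Function.uncurry g (x, y)‖ ∂(volume : Measure ℝ))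
          = fun x => ∫ u, ‖g x u‖ := rfl
      rw [huncur]
      have hmeas : AEStronglyMeasurable (fun x => ∫ u, ‖g x u‖) volume := by
        exact (hgm.norm.aestronglyMeasurable).integral_prod_right'
      refine Integrable.mono hw1.abs hmeas (ae_of_all _ (fun x => ?_))
      have h1 : ∀ u, ‖g x u‖ = |w x * gaussianPDFReal 0 1 x| *
          (gaussianPDFReal 0 r2 (u - a * x) * S.indicator 1 u) := by
        intro u
        rw [hg]
        simp only [Real.norm_eq_abs, abs_mul]
        by_cases h : u ∈ S <;>
          simp [Set.indicator_apply, h, abs_of_nonneg (gaussianPDFReal_nonneg _ _ _)] <;>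
          ring_nf
      have h2 : ∫ u, ‖g x u‖ = |w x * gaussianPDFReal 0 1 x| *
          ∫ u, gaussianPDFReal 0 r2 (u - a * x) * S.indicator 1 u := by
        simp_rw [h1]; rw [MeasureTheory.integral_const_mul]
      have h3 : ∫ u, gaussianPDFReal 0 r2 (u - a * x) * S.indicator 1 u ≤ 1 := by
        have hle : ∀ u, gaussianPDFReal 0 r2 (u - a * x) * S.indicator 1 u ≤
            gaussianPDFReal 0 r2 (u - a * x) := by
          intro u
          by_cases h : u ∈ S <;>
            simp [Set.indicator_apply, h, gaussianPDFReal_nonneg]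
        have hint2 : Integrable (fun u => gaussianPDFReal 0 r2 (u - a * x)) volume :=
          (integrable_gaussianPDFReal 0 r2).comp_sub_right (a*x)
        calc ∫ u, gaussianPDFReal 0 r2 (u - a * x) * S.indicator 1 u
            ≤ ∫ u, gaussianPDFReal 0 r2 (u - a * x) := by
              refine integral_mono ?_ hint2 hle
              refine hint2.mono' ?_ (ae_of_all _ (fun u => ?_))
              · exact (((measurable_gaussianPDFReal 0 r2).comp
                  (measurable_id.sub_const (a*x))).mul
                  (hind)).aestronglyMeasurable
              · rw [Real.norm_eq_abs]
                by_cases h : u ∈ S <;>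
                  simp [Set.indicator_apply, h, abs_of_nonneg (gaussianPDFReal_nonneg _ _ _),
                    gaussianPDFReal_nonneg]
          _ = 1 := by
              rw [show (fun u => gaussianPDFReal 0 r2 (u - a*x)) =
                fun u => gaussianPDFReal (0 + a*x) r2 u from funext (fun u =>
                  gaussianPDFReal_sub u (a*x))]
              rw [zero_add]
              exact integral_gaussianPDFReal_eq_one (a*x) hr2
      have h4 : 0 ≤ ∫ u, ‖g x u‖ := integral_nonneg (fun u => norm_nonneg _)
      rw [Real.norm_eq_abs, Real.norm_eq_abs, abs_of_nonneg h4, abs_abs]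
      calc ∫ u, ‖g x u‖ ≤ |w x * gaussianPDFReal 0 1 x| * 1 := by
            rw [h2]
            refine mul_le_mul_of_nonneg_left h3 (abs_nonneg _)
        _ = |w x * gaussianPDFReal 0 1 x| := mul_one _
  rw [MeasureTheory.integral_integral_swap hgint]
  -- inner x-integral computation
  have hx : ∀ u : ℝ, ∫ x, g x u = S.indicator (fun u => gaussianPDFReal 0 v u * k (a*u/v)) u := by
    intro u
    rw [st13_ind S (fun u => gaussianPDFReal 0 v u * k (a*u/v)) u]
    have hfac : ∀ x : ℝ, g x u = (w x * gaussianPDFReal 0 (r2/v) (x - a*u/v)) *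
        (gaussianPDFReal 0 v u * S.indicator 1 u) := by
      intro x
      rw [hg]
      show w x * gaussianPDFReal 0 1 x * gaussianPDFReal 0 r2 (u - a * x) * S.indicator 1 u = _
      rw [mul_assoc (w x), st13_factor a r2 v hr2 hv x u]
      ring
    simp_rw [hfac]
    rw [MeasureTheory.integral_mul_const, hwmean (a*u/v) (r2/v) hr2v]
    ring
  simp_rw [hx]
  rw [integral_indicator hS]
  rw [st13_density_set 0 v hvne S hS]

-- hypotheses instances for w = 1
lemma st13_w1_int : ∀ (m : ℝ) (t : ℝ≥0),
    Integrable (fun x => (1:ℝ) * gaussianPDFReal 0 t (x - m)) := by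
  intro m t
  simpa using (integrable_gaussianPDFReal 0 t).comp_sub_right m

lemma st13_w1_mean : ∀ (m : ℝ) (t : ℝ≥0), t ≠ 0 →
    ∫ x, (1:ℝ) * gaussianPDFReal 0 t (x - m) = (fun _ : ℝ => (1:ℝ)) m := by
  intro m t ht
  simp only [one_mul]
  rw [integral_sub_right_eq_self (fun y => gaussianPDFReal 0 t y) m]
  exact integral_gaussianPDFReal_eq_one 0 ht

-- law of a*x + y
lemma st13_map_law (a : ℝ) (r2 : ℝ≥0) (hr2 : r2 ≠ 0) (v : ℝ≥0) (hv : (v:ℝ) = a^2 + r2) :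
    ((gaussianReal 0 1).prod (gaussianReal 0 r2)).map (fun p : ℝ × ℝ => a * p.1 + p.2)
      = gaussianReal 0 v := by
  have hmeas : Measurable (fun p : ℝ × ℝ => a * p.1 + p.2) :=
    (measurable_fst.const_mul a).add measurable_snd
  have : IsProbabilityMeasure (((gaussianReal 0 1).prod (gaussianReal 0 r2)).map
      (fun p : ℝ × ℝ => a * p.1 + p.2)) := Measure.isProbabilityMeasure_map hmeas.aemeasurable
  ext S hS
  have key := st13_main2 a r2 hr2 v hv S hS (fun _ => 1) (fun _ => 1) measurable_const
    st13_w1_int st13_w1_mean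
  simp only [one_mul] at key
  have h1 : ∫ p, S.indicator (1:ℝ→ℝ) (a * p.1 + p.2)
      ∂((gaussianReal 0 1).prod (gaussianReal 0 r2))
      = ((((gaussianReal 0 1).prod (gaussianReal 0 r2)).map
          (fun p : ℝ × ℝ => a * p.1 + p.2)) S).toReal := by
    rw [Measure.map_apply hmeas hS, ← measureReal_def, ← integral_indicator_one (hS.preimage hmeas)]
    refine integral_congr_ae (ae_of_all _ (fun p => ?_))
    by_cases h : (a * p.1 + p.2) ∈ S <;> simp [Set.indicator_apply, h, Set.mem_preimage]
  have h2 : ∫ u in S, (1:ℝ) ∂(gaussianReal 0 v) = ((gaussianReal 0 v) S).toReal := by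
    rw [setIntegral_const]; simp; rfl
  rw [h1, h2] at key
  exact (ENNReal.toReal_eq_toReal_iff' (measure_ne_top _ _) (measure_ne_top _ _)).mp key

lemma st13_map_linear2 (b c : ℝ) (hb : b ≠ 0) (V : ℝ≥0) (hV : (V:ℝ) = b^2 + c^2) :
    ((gaussianReal 0 1).prod (gaussianReal 0 1)).map (fun q : ℝ × ℝ => b * q.1 + c * q.2)
      = gaussianReal 0 V := by
  rcases eq_or_ne c 0 with rfl | hc
  · have hfun : (fun q : ℝ × ℝ => b * q.1 + 0 * q.2) = (fun x : ℝ => b * x) ∘ Prod.fst := by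
      funext q; simp
    rw [hfun, ← Measure.map_map (measurable_const_mul b) measurable_fst]
    rw [Measure.map_fst_prod]
    simp only [measure_univ, one_smul]
    have := gaussianReal_map_const_mul (μ := 0) (v := 1) b
    rw [show (fun x : ℝ => b * x) = (b * ·) from rfl, this, mul_zero, mul_one]
    congr 1
    ext
    push_cast
    rw [hV]; ring
  · have hc2 : (⟨c^2, sq_nonneg c⟩ : ℝ≥0) ≠ 0 := by
      intro h
      apply hc
      have h2 : (c:ℝ)^2 = 0 := by
        have := congrArg NNReal.toReal h
        exact this
      exact pow_eq_zero_iff (by norm_num : (2:ℕ) ≠ 0) |>.mp h2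
    have hfun : (fun q : ℝ × ℝ => b * q.1 + c * q.2)
        = (fun p : ℝ × ℝ => b * p.1 + p.2) ∘ (Prod.map id (fun y => c * y)) := by
      funext q; simp [Prod.map]
    rw [hfun, ← Measure.map_map (show Measurable fun p : ℝ × ℝ => b * p.1 + p.2 from
        (measurable_fst.const_mul b).add measurable_snd)
      (measurable_id.prodMap (measurable_const_mul c))]
    have hinner : ((gaussianReal 0 1).prod (gaussianReal 0 1)).map
        (Prod.map id (fun y => c * y))
        = (gaussianReal 0 1).prod (gaussianReal 0 ⟨c^2, sq_nonneg c⟩) := by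
      rw [← Measure.map_prod_map _ _ measurable_id (measurable_const_mul c)]
      rw [Measure.map_id]
      have := gaussianReal_map_const_mul (μ := 0) (v := 1) c
      rw [show (fun y : ℝ => c * y) = (c * ·) from rfl, this, mul_zero, mul_one]
      rfl
    rw [hinner]
    exact st13_map_law b _ hc2 V (by push_cast; change (V:ℝ) = b^2 + c^2; linarith [hV])

-- main ℝ³ lemma
lemma st13_main3 (a b c : ℝ) (hb : b ≠ 0) (v : ℝ≥0) (hv : (v:ℝ) = a^2 + b^2 + c^2)
    (S : Set ℝ) (hS : MeasurableSet S) (w k : ℝ → ℝ) (hw : Measurable w)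
    (hwint : ∀ (m : ℝ) (t : ℝ≥0), Integrable (fun x => w x * gaussianPDFReal 0 t (x - m)))
    (hwmean : ∀ (m : ℝ) (t : ℝ≥0), t ≠ 0 → ∫ x, w x * gaussianPDFReal 0 t (x - m) = k m) :
    ∫ p : ℝ × ℝ × ℝ, w p.1 * S.indicator 1 (a * p.1 + b * p.2.1 + c * p.2.2) ∂mu3
      = ∫ u in S, k (a * u / v) ∂(gaussianReal 0 v) := by
  set r2 : ℝ≥0 := ⟨b^2 + c^2, by positivity⟩ with hr2def
  have hr2 : r2 ≠ 0 := by
    intro h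
    have h3 := congrArg NNReal.toReal h
    simp only [hr2def, NNReal.coe_mk, NNReal.coe_zero] at h3
    change b^2 + c^2 = 0 at h3
    have : b = 0 := by nlinarith [sq_nonneg b, sq_nonneg c]
    exact hb this
  set Φ : ℝ × ℝ × ℝ → ℝ × ℝ := fun p => (p.1, b * p.2.1 + c * p.2.2) with hΦdef
  have hΦ : Measurable Φ :=
    measurable_fst.prodMk ((measurable_fst.comp measurable_snd).const_mul b |>.add
      ((measurable_snd.comp measurable_snd).const_mul c))
  have hmap : mu3.map Φ = (gaussianReal 0 1).prod (gaussianReal 0 r2) := by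
    have hfun : Φ = Prod.map (id : ℝ → ℝ) (fun q : ℝ × ℝ => b * q.1 + c * q.2) := by
      funext p; rfl
    rw [hfun]
    unfold mu3
    rw [← Measure.map_prod_map _ _ measurable_id
      (show Measurable fun q : ℝ × ℝ => b * q.1 + c * q.2 from
        (measurable_fst.const_mul b).add (measurable_snd.const_mul c))]
    rw [Measure.map_id, st13_map_linear2 b c hb r2 rfl]
  have hint : (fun p : ℝ × ℝ × ℝ => w p.1 * S.indicator 1 (a * p.1 + b * p.2.1 + c * p.2.2))
      = (fun q : ℝ × ℝ => w q.1 * S.indicator 1 (a * q.1 + q.2)) ∘ Φ := by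
    funext p
    simp only [Function.comp_apply, hΦdef]
    rw [add_assoc]
  have hmeas2 : AEStronglyMeasurable (fun q : ℝ × ℝ => w q.1 * S.indicator 1 (a * q.1 + q.2))
      (mu3.map Φ) := by
    rw [hmap]
    exact ((hw.comp measurable_fst).mul ((measurable_one.indicator hS).comp
      ((measurable_fst.const_mul a).add measurable_snd))).aestronglyMeasurable
  have hIM := integral_map hΦ.aemeasurable hmeas2
  rw [hmap] at hIM
  calc ∫ p : ℝ × ℝ × ℝ, w p.1 * S.indicator 1 (a * p.1 + b * p.2.1 + c * p.2.2) ∂mu3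
      = ∫ p, (fun q : ℝ × ℝ => w q.1 * S.indicator 1 (a * q.1 + q.2)) (Φ p) ∂mu3 := by
        refine integral_congr_ae (ae_of_all _ (fun p => ?_))
        simp only [hΦdef]
        rw [add_assoc]
    _ = ∫ q, w q.1 * S.indicator 1 (a * q.1 + q.2)
        ∂((gaussianReal 0 1).prod (gaussianReal 0 r2)) := hIM.symm
    _ = ∫ u in S, k (a * u / v) ∂(gaussianReal 0 v) :=
        st13_main2 a r2 hr2 v (by rw [hv]; simp only [hr2def, NNReal.coe_mk]; show _ = a^2 + (b^2+c^2); ring) S hS w k hw hwint hwmean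

-- permutation invariance
lemma st13_perm : mu3.map (fun p : ℝ × ℝ × ℝ => (p.2.1, p.1, p.2.2)) = mu3 := by
  set m := gaussianReal 0 1
  have h1 : MeasurePreserving (MeasurableEquiv.prodAssoc : (ℝ × ℝ) × ℝ ≃ᵐ ℝ × ℝ × ℝ)
      ((m.prod m).prod m) (m.prod (m.prod m)) := measurePreserving_prodAssoc m m m
  have hsw : MeasurePreserving (Prod.map (Prod.swap : ℝ × ℝ → ℝ × ℝ) (id : ℝ → ℝ))
      ((m.prod m).prod m) ((m.prod m).prod m) :=
    (Measure.measurePreserving_swap).prod (MeasurePreserving.id m)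
  have h2 := (h1.comp hsw).comp h1.symm
  have hfun : (((MeasurableEquiv.prodAssoc : (ℝ × ℝ) × ℝ ≃ᵐ ℝ × ℝ × ℝ) ∘
      (Prod.map Prod.swap id)) ∘
      ⇑(MeasurableEquiv.prodAssoc : (ℝ × ℝ) × ℝ ≃ᵐ ℝ × ℝ × ℝ).symm)
      = fun p : ℝ × ℝ × ℝ => (p.2.1, p.1, p.2.2) := by
    funext p
    rfl
  have := h2.map_eq
  rw [hfun] at this
  exact this

lemma st13_arith (c n1 n2 P1 P2 q t1 : ℝ) (hc : 0 < c) (hq0 : 0 < q) (hq1 : q ≤ 1)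
    (hP1 : 0 < P1) (hP2 : 0 < P2) (h1 : n1 ≤ P1 * t1) (h2 : P2 * t1 < n2) :
    (c * n1 + (1 - q) * (c * n2)) / (P1 + (1 - q) * P2) < c * (n1 + n2) / (P1 + P2) := by
  have key : n1 * P2 < n2 * P1 := by nlinarith
  have hd1 : 0 < P1 + (1 - q) * P2 := by nlinarith
  have hd2 : 0 < P1 + P2 := by linarith
  rw [div_lt_div_iff₀ hd1 hd2]
  nlinarith [mul_pos (mul_pos hc hq0) (sub_pos.mpr key)]

theorem stmt13 (α σZ : ℝ) (hα : α ∈ Set.Ioo (0 : ℝ) 1) (hσZ : 0 ≤ σZ)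
    (A : ℝ × ℝ × ℝ → ℝ)
    (hA : A = fun p => α * p.1 + (1 - α) * p.2.1 + σZ * p.2.2)
    (τ₁ τ₂ q : ℝ) (hτ : τ₂ < τ₁) (hq : q ∈ Set.Ioc (0 : ℝ) 1)
    (Mt Ms D : ℝ)
    (hD : D = (mu3 {p : ℝ × ℝ × ℝ | τ₂ ≤ A p ∧ A p < τ₁}).toReal
        + (1 - q) * (mu3 {p : ℝ × ℝ × ℝ | τ₁ ≤ A p}).toReal)
    (hMt : Mt = ((∫ p in {p : ℝ × ℝ × ℝ | τ₂ ≤ A p ∧ A p < τ₁}, p.1 ∂mu3)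
        + (1 - q) * ∫ p in {p : ℝ × ℝ × ℝ | τ₁ ≤ A p}, p.1 ∂mu3) / D)
    (hMs : Ms = ((∫ p in {p : ℝ × ℝ × ℝ | τ₂ ≤ A p ∧ A p < τ₁}, p.2.1 ∂mu3)
        + (1 - q) * ∫ p in {p : ℝ × ℝ × ℝ | τ₁ ≤ A p}, p.2.1 ∂mu3) / D) :
    Mt < (∫ p in {p : ℝ × ℝ × ℝ | τ₂ ≤ A p}, p.1 ∂mu3) /
        (mu3 {p : ℝ × ℝ × ℝ | τ₂ ≤ A p}).toReal ∧
    Ms < (∫ p in {p : ℝ × ℝ × ℝ | τ₂ ≤ A p}, p.2.1 ∂mu3) /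
        (mu3 {p : ℝ × ℝ × ℝ | τ₂ ≤ A p}).toReal := by
  obtain ⟨hα0, hα1⟩ := hα
  obtain ⟨hq0, hq1⟩ := hq
  have hb : (1 - α) ≠ 0 := by intro h; apply absurd hα1; linarith [sub_eq_zero.mp h]
  set v : ℝ≥0 := ⟨α^2 + (1-α)^2 + σZ^2, by positivity⟩ with hvdef
  have hv : (v:ℝ) = α^2 + (1-α)^2 + σZ^2 := rfl
  have hvpos : (0:ℝ) < v := by rw [hv]; positivity
  have hvne : v ≠ 0 := by
    intro h; rw [h] at hvpos; simp at hvpos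
  set N := gaussianReal 0 v with hNdef
  have hAmeas : Measurable (fun p : ℝ × ℝ × ℝ => α * p.1 + (1-α) * p.2.1 + σZ * p.2.2) := by
    apply Measurable.add
    apply Measurable.add
    · exact measurable_fst.const_mul α
    · exact (measurable_fst.comp measurable_snd).const_mul (1-α)
    · exact (measurable_snd.comp measurable_snd).const_mul σZ
  -- conversion: measure
  have hmeasure : ∀ S : Set ℝ, MeasurableSet S →
      (mu3 ((fun p : ℝ × ℝ × ℝ => α * p.1 + (1-α) * p.2.1 + σZ * p.2.2) ⁻¹' S)).toReal
        = (N S).toReal := by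
    intro S hS
    rw [← measureReal_def, ← integral_indicator_one (hS.preimage hAmeas)]
    have h2 : ∀ p : ℝ × ℝ × ℝ,
        ((fun p : ℝ × ℝ × ℝ => α * p.1 + (1-α) * p.2.1 + σZ * p.2.2) ⁻¹' S).indicator
          (1 : (ℝ × ℝ × ℝ) → ℝ) p
        = (fun _ : ℝ => (1:ℝ)) p.1 * S.indicator 1 (α * p.1 + (1-α) * p.2.1 + σZ * p.2.2) := by
      intro p
      by_cases h : (α * p.1 + (1-α) * p.2.1 + σZ * p.2.2) ∈ S <;>
        simp [Set.indicator_apply, h, Set.mem_preimage]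
    rw [integral_congr_ae (ae_of_all _ h2)]
    rw [st13_main3 α (1-α) σZ hb v hv S hS (fun _ => 1) (fun _ => 1) measurable_const
      st13_w1_int st13_w1_mean]
    rw [setIntegral_const]
    simp
    rfl
  -- conversion: integral of t
  have hmt : ∀ S : Set ℝ, MeasurableSet S →
      ∫ p in ((fun p : ℝ × ℝ × ℝ => α * p.1 + (1-α) * p.2.1 + σZ * p.2.2) ⁻¹' S), p.1 ∂mu3
        = (α / v) * ∫ u in S, u ∂N := by
    intro S hS
    rw [← integral_indicator (hS.preimage hAmeas)]
    have h2 : ∀ p : ℝ × ℝ × ℝ,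
        ((fun p : ℝ × ℝ × ℝ => α * p.1 + (1-α) * p.2.1 + σZ * p.2.2) ⁻¹' S).indicator
          (fun p : ℝ × ℝ × ℝ => p.1) p
        = (fun x : ℝ => x) p.1 * S.indicator 1 (α * p.1 + (1-α) * p.2.1 + σZ * p.2.2) := by
      intro p
      by_cases h : (α * p.1 + (1-α) * p.2.1 + σZ * p.2.2) ∈ S <;>
        simp [Set.indicator_apply, h, Set.mem_preimage]
    rw [integral_congr_ae (ae_of_all _ h2)]
    rw [st13_main3 α (1-α) σZ hb v hv S hS (fun x => x) (fun m => m) measurable_id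
      st13_int st13_mean]
    rw [← MeasureTheory.integral_const_mul]
    refine setIntegral_congr_fun hS (fun u _ => ?_)
    ring
  -- conversion: integral of s (via permutation)
  have hms : ∀ S : Set ℝ, MeasurableSet S →
      ∫ p in ((fun p : ℝ × ℝ × ℝ => α * p.1 + (1-α) * p.2.1 + σZ * p.2.2) ⁻¹' S), p.2.1 ∂mu3
        = ((1-α) / v) * ∫ u in S, u ∂N := by
    intro S hS
    rw [← integral_indicator (hS.preimage hAmeas)]
    set F : ℝ × ℝ × ℝ → ℝ := fun p' =>
      p'.1 * S.indicator 1 ((1-α) * p'.1 + α * p'.2.1 + σZ * p'.2.2) with hFdef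
    set σf : ℝ × ℝ × ℝ → ℝ × ℝ × ℝ := fun p => (p.2.1, p.1, p.2.2) with hσdef
    have hσmeas : Measurable σf :=
      (measurable_fst.comp measurable_snd).prodMk
        (measurable_fst.prodMk (measurable_snd.comp measurable_snd))
    have hFmeas : Measurable F := by
      apply Measurable.mul measurable_fst
      exact (measurable_one.indicator hS).comp (by
        apply Measurable.add
        apply Measurable.add
        · exact measurable_fst.const_mul (1-α)
        · exact (measurable_fst.comp measurable_snd).const_mul α
        · exact (measurable_snd.comp measurable_snd).const_mul σZ)
    have h2 : ∀ p : ℝ × ℝ × ℝ,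
        ((fun p : ℝ × ℝ × ℝ => α * p.1 + (1-α) * p.2.1 + σZ * p.2.2) ⁻¹' S).indicator
          (fun p : ℝ × ℝ × ℝ => p.2.1) p = F (σf p) := by
      intro p
      have harg : (1-α) * p.2.1 + α * p.1 + σZ * p.2.2
          = α * p.1 + (1-α) * p.2.1 + σZ * p.2.2 := by ring
      show _ = p.2.1 * S.indicator 1 ((1-α) * p.2.1 + α * p.1 + σZ * p.2.2)
      rw [harg]
      by_cases h : (α * p.1 + (1-α) * p.2.1 + σZ * p.2.2) ∈ S <;>
        simp [Set.indicator_apply, h, Set.mem_preimage]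
    rw [integral_congr_ae (ae_of_all _ h2)]
    have hFae : AEStronglyMeasurable F (mu3.map σf) := by
      rw [st13_perm]; exact hFmeas.aestronglyMeasurable
    have hIM := integral_map hσmeas.aemeasurable hFae
    rw [st13_perm] at hIM
    rw [← hIM]
    have hv' : (v:ℝ) = (1-α)^2 + α^2 + σZ^2 := by rw [hv]; ring
    rw [show F = fun p' : ℝ × ℝ × ℝ =>
        p'.1 * S.indicator 1 ((1-α) * p'.1 + α * p'.2.1 + σZ * p'.2.2) from rfl]
    rw [st13_main3 (1-α) α σZ hα0.ne' v hv' S hS (fun x => x) (fun m => m) measurable_id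
      st13_int st13_mean]
    rw [← MeasureTheory.integral_const_mul]
    refine setIntegral_congr_fun hS (fun u _ => ?_)
    ring
  -- set identifications
  subst hA
  have e1 : {p : ℝ × ℝ × ℝ | τ₂ ≤ (fun p : ℝ × ℝ × ℝ =>
        α * p.1 + (1-α) * p.2.1 + σZ * p.2.2) p ∧ (fun p : ℝ × ℝ × ℝ =>
        α * p.1 + (1-α) * p.2.1 + σZ * p.2.2) p < τ₁}
      = (fun p : ℝ × ℝ × ℝ => α * p.1 + (1-α) * p.2.1 + σZ * p.2.2) ⁻¹' (Set.Ico τ₂ τ₁) := by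
    ext p; simp [Set.mem_Ico]
  have e2 : {p : ℝ × ℝ × ℝ | τ₁ ≤ (fun p : ℝ × ℝ × ℝ =>
        α * p.1 + (1-α) * p.2.1 + σZ * p.2.2) p}
      = (fun p : ℝ × ℝ × ℝ => α * p.1 + (1-α) * p.2.1 + σZ * p.2.2) ⁻¹' (Set.Ici τ₁) := by
    ext p; simp
  have e3 : {p : ℝ × ℝ × ℝ | τ₂ ≤ (fun p : ℝ × ℝ × ℝ =>
        α * p.1 + (1-α) * p.2.1 + σZ * p.2.2) p}
      = (fun p : ℝ × ℝ × ℝ => α * p.1 + (1-α) * p.2.1 + σZ * p.2.2) ⁻¹' (Set.Ici τ₂) := by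
    ext p; simp
  rw [e1, e2] at hD hMt hMs
  rw [e3]
  -- 1D quantities
  set P1 : ℝ := (N (Set.Ico τ₂ τ₁)).toReal with hP1def
  set P2 : ℝ := (N (Set.Ici τ₁)).toReal with hP2def
  set n1 : ℝ := ∫ u in Set.Ico τ₂ τ₁, u ∂N with hn1def
  set n2 : ℝ := ∫ u in Set.Ici τ₁, u ∂N with hn2def
  have hNid : Integrable (fun u : ℝ => u) N :=
    st13_integrable_gauss v (fun u => u) (st13_int0 v) hvne
  have hP1pos : 0 < P1 := by
    refine ENNReal.toReal_pos ?_ (measure_ne_top _ _)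
    refine (st13_pos v hvne _ measurableSet_Ico ?_).ne'
    rw [Real.volume_Ico]
    exact (ENNReal.ofReal_pos.mpr (by linarith)).ne'
  have hP2pos : 0 < P2 := by
    refine ENNReal.toReal_pos ?_ (measure_ne_top _ _)
    refine (st13_pos v hvne _ measurableSet_Ici ?_).ne'
    rw [Real.volume_Ici]
    simp
  have hdisj : Disjoint (Set.Ico τ₂ τ₁) (Set.Ici τ₁) := by
    rw [Set.disjoint_left]
    intro x hx hx2
    exact absurd hx.2 (not_lt.mpr hx2)
  have hPsum : (N (Set.Ici τ₂)).toReal = P1 + P2 := by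
    rw [← Set.Ico_union_Ici_eq_Ici hτ.le, measure_union hdisj measurableSet_Ici,
      ENNReal.toReal_add (measure_ne_top _ _) (measure_ne_top _ _)]
  have hnsum : ∫ u in Set.Ici τ₂, u ∂N = n1 + n2 := by
    rw [← Set.Ico_union_Ici_eq_Ici hτ.le,
      setIntegral_union hdisj measurableSet_Ici hNid.integrableOn hNid.integrableOn]
  have hn1le : n1 ≤ P1 * τ₁ := by
    rw [hn1def, hP1def]
    calc ∫ u in Set.Ico τ₂ τ₁, u ∂N ≤ ∫ _ in Set.Ico τ₂ τ₁, τ₁ ∂N := by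
          refine setIntegral_mono_on hNid.integrableOn ?_ measurableSet_Ico
            (fun x hx => hx.2.le)
          exact integrableOn_const (measure_lt_top _ _).ne
      _ = (N (Set.Ico τ₂ τ₁)).toReal * τ₁ := by rw [setIntegral_const]; rw [smul_eq_mul]; rfl
  have hn2gt : P2 * τ₁ < n2 := by
    have h0 : 0 < ∫ u in Set.Ici τ₁, (u - τ₁) ∂N := by
      rw [setIntegral_pos_iff_support_of_nonneg_ae ?hnn ?hin]
      case hnn =>
        rw [EventuallyLE, ae_restrict_iff' measurableSet_Ici]
        exact ae_of_all _ (fun x hx => by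
          simp only [Pi.zero_apply]
          linarith [Set.mem_Ici.mp hx])
      case hin =>
        exact (hNid.integrableOn.sub (integrableOn_const (measure_lt_top _ _).ne))
      · refine lt_of_lt_of_le (st13_pos v hvne (Set.Ioi τ₁) measurableSet_Ioi ?_)
          (measure_mono ?_)
        · rw [Real.volume_Ioi]; simp
        · intro x hx
          exact ⟨by simp [Function.support]; intro h; linarith [Set.mem_Ioi.mp hx, h],
            Set.mem_Ici.mpr (le_of_lt hx)⟩
    have h1 : ∫ u in Set.Ici τ₁, (u - τ₁) ∂N
        = n2 - P2 * τ₁ := by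
      rw [integral_sub hNid.integrableOn (integrableOn_const (measure_lt_top _ _).ne)]
      rw [setIntegral_const, smul_eq_mul, hn2def, hP2def]; rfl
    linarith [h1 ▸ h0]
  -- finish
  have hcα : 0 < α / (v:ℝ) := div_pos hα0 hvpos
  have hcs : 0 < (1-α) / (v:ℝ) := div_pos (by linarith) hvpos
  constructor
  · rw [hMt, hD, hmt _ measurableSet_Ico, hmt _ measurableSet_Ici, hmt _ measurableSet_Ici,
      hmeasure _ measurableSet_Ico, hmeasure _ measurableSet_Ici, hmeasure _ measurableSet_Ici,
      hPsum, hnsum]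
    rw [← hn1def, ← hn2def, ← hP1def, ← hP2def]
    exact st13_arith (α / v) n1 n2 P1 P2 q τ₁ hcα hq0 hq1 hP1pos hP2pos hn1le hn2gt
  · rw [hMs, hD, hms _ measurableSet_Ico, hms _ measurableSet_Ici, hms _ measurableSet_Ici,
      hmeasure _ measurableSet_Ico, hmeasure _ measurableSet_Ici, hmeasure _ measurableSet_Ici,
      hPsum, hnsum]
    rw [← hn1def, ← hn2def, ← hP1def, ← hP2def]
    exact st13_arith ((1-α) / v) n1 n2 P1 P2 q τ₁ hcs hq0 hq1 hP1pos hP2pos hn1le hn2gt
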